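/- Let f(x) be the Hankel quartic form in four variables generated by v ∈ ℝ^{13}. If f(x) ≥ 0 for all x ∈ ℝ^4, then v_0 + 6 v_6 + v_{12} ≥ 4 |v_3 + v_9|. -/

import Mathlib

noncomputable def hankelForm (v : Fin 13 → ℝ) (x : Fin 4 → ℝ) : ℝ :=
  ∑ i1 : Fin 4, ∑ i2 : Fin 4, ∑ i3 : Fin 4, ∑ i4 : Fin 4,
    v ⟨i1.1 + i2.1 + i3.1 + i4.1, by omega⟩ * x i1 * x i2 * x i3 * x i4

theorem stmt4 (v : Fin 13 → ℝ) (hpsd : ∀ x : Fin 4 → ℝ, 0 ≤ hankelForm v x) :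
    4 * |v 3 + v 9| ≤ v 0 + 6 * v 6 + v 12 := by
  have h1 := hpsd ![1,0,0,1]
  have h2 := hpsd ![1,0,0,-1]
  simp [hankelForm, Fin.sum_univ_four] at h1 h2
  have e : ((3:Fin 4):ℕ) = 3 := rfl
  rcases abs_cases (v 3 + v 9) with ⟨h,_⟩|⟨h,_⟩ <;> rw [h] <;> linarith
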